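/- arXiv:2006.10485 — 4 statements merged into one kernel-verified Lean document; each statement's English description precedes it below -/
import Mathlib

section
/- Suppose (Y_t)_{t≥0} is a square-integrable process with Var(Y_t - Y_s) = Var(Y_{t-s}) for all 0 ≤ s ≤ t, and there exist v > 0 and α > 0 with lim_{s→∞} Var(Y_s)/s^{2α} = v. Then for every a ≥ 1, lim_{s→∞} Corr(Y_s, Y_{as}) = (1 + a^{2α} - (a-1)^{2α}) / (2 a^α). -/
open MeasureTheory ProbabilityTheory Filter

/-- Covariance of two real random variables. -/
noncomputable def cov {Ω : Type*} [MeasurableSpace Ω] (μ : Measure Ω) (X Y : Ω → ℝ) : ℝ :=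
  ∫ ω, (X ω - ∫ ω', X ω' ∂μ) * (Y ω - ∫ ω', Y ω' ∂μ) ∂μ

/-- Correlation coefficient. -/
noncomputable def corr {Ω : Type*} [MeasurableSpace Ω] (μ : Measure Ω) (X Y : Ω → ℝ) : ℝ :=
  cov μ X Y / Real.sqrt (variance X μ * variance Y μ)

theorem cov_eq_half {Ω : Type*} [MeasurableSpace Ω] (μ : Measure Ω) [IsProbabilityMeasure μ]
    (X Y : Ω → ℝ) (hX : MemLp X 2 μ) (hY : MemLp Y 2 μ) :
    cov μ X Y = (variance X μ + variance Y μ - variance (fun ω => Y ω - X ω) μ) / 2 := by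
  unfold cov
  set mX := ∫ ω', X ω' ∂μ with hmX
  set mY := ∫ ω', Y ω' ∂μ with hmY
  have hiX : Integrable X μ := hX.integrable one_le_two
  have hiY : Integrable Y μ := hY.integrable one_le_two
  have hX2 : Integrable (fun ω => (X ω - mX)^2) μ :=
    (hX.sub (memLp_const mX)).integrable_sq
  have hY2 : Integrable (fun ω => (Y ω - mY)^2) μ :=
    (hY.sub (memLp_const mY)).integrable_sq
  have hXY2 : Integrable (fun ω => ((Y ω - mY) - (X ω - mX))^2) μ :=
    ((hY.sub (memLp_const mY)).sub (hX.sub (memLp_const mX))).integrable_sq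
  have hVX : variance X μ = ∫ ω, (X ω - mX)^2 ∂μ := by
    rw [variance_eq_integral hX.aestronglyMeasurable.aemeasurable]
  have hVY : variance Y μ = ∫ ω, (Y ω - mY)^2 ∂μ := by
    rw [variance_eq_integral hY.aestronglyMeasurable.aemeasurable]
  have hVXY : variance (fun ω => Y ω - X ω) μ = ∫ ω, ((Y ω - mY) - (X ω - mX))^2 ∂μ := by
    show variance (Y - X) μ = _
    rw [variance_eq_integral (hY.sub hX).aestronglyMeasurable.aemeasurable]
    have hm : (∫ ω, (Y ω - X ω) ∂μ) = mY - mX := integral_sub hiY hiX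
    congr 1
    ext ω
    simp only [Pi.pow_apply, Pi.sub_apply, hm]
    ring
  have key : ∀ ω, (X ω - mX) * (Y ω - mY)
      = ((X ω - mX)^2 + (Y ω - mY)^2 - ((Y ω - mY) - (X ω - mX))^2) / 2 := by
    intro ω; ring
  calc (∫ ω, (X ω - mX) * (Y ω - mY) ∂μ)
      = ∫ ω, ((X ω - mX)^2 + (Y ω - mY)^2 - ((Y ω - mY) - (X ω - mX))^2) / 2 ∂μ := by
        simp_rw [key]
    _ = (∫ ω, ((X ω - mX)^2 + (Y ω - mY)^2 - ((Y ω - mY) - (X ω - mX))^2) ∂μ) / 2 := by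
        rw [integral_div]
    _ = ((∫ ω, (X ω - mX)^2 ∂μ) + (∫ ω, (Y ω - mY)^2 ∂μ)
          - ∫ ω, ((Y ω - mY) - (X ω - mX))^2 ∂μ) / 2 := by
        have hsum : Integrable (fun ω => (X ω - mX)^2 + (Y ω - mY)^2) μ := hX2.add hY2
        rw [integral_sub hsum hXY2, integral_add hX2 hY2]
    _ = (variance X μ + variance Y μ - variance (fun ω => Y ω - X ω) μ) / 2 := by
        rw [hVX, hVY, hVXY]

/-- Aging for a process satisfying covariance-to-variance reduction whose variance grows
like `v * s ^ (2α)`. -/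
theorem aging_of_variance_asymptotics {Ω : Type*} [MeasurableSpace Ω] (μ : Measure Ω)
    [IsProbabilityMeasure μ] (Y : ℝ → Ω → ℝ)
    (hmem : ∀ t : ℝ, 0 ≤ t → MemLp (Y t) 2 μ)
    (hstat : ∀ s t : ℝ, 0 ≤ s → s ≤ t →
      variance (fun ω => Y t ω - Y s ω) μ = variance (Y (t - s)) μ)
    (v α : ℝ) (hv : 0 < v) (hα : 0 < α)
    (hlim : Tendsto (fun s : ℝ => variance (Y s) μ / s ^ (2 * α)) atTop (nhds v)) :
    ∀ a : ℝ, 1 ≤ a →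
      Tendsto (fun s : ℝ => corr μ (Y s) (Y (a * s))) atTop
        (nhds ((1 + a ^ (2 * α) - (a - 1) ^ (2 * α)) / (2 * a ^ α))) := by
  intro a ha
  have ha0 : (0:ℝ) < a := lt_of_lt_of_le one_pos ha
  set f : ℝ → ℝ := fun s => variance (Y s) μ with hf
  have hf0 : f 0 = 0 := by
    have h := hstat 0 0 le_rfl le_rfl
    simp only [sub_self] at h
    rw [hf]
    simp only
    rw [← h]
    exact variance_zero μ
  -- general scaled limit
  have haux : ∀ b : ℝ, 0 ≤ b →
      Tendsto (fun s : ℝ => f (b * s) / s ^ (2 * α)) atTop (nhds (v * b ^ (2 * α))) := by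
    intro b hb
    rcases eq_or_lt_of_le hb with hb0 | hb0
    · have : (fun s : ℝ => f (b * s) / s ^ (2 * α)) = fun s : ℝ => (0:ℝ) := by
        funext s; rw [← hb0, zero_mul, hf0, zero_div]
      rw [this, ← hb0, Real.zero_rpow (by positivity), mul_zero]
      exact tendsto_const_nhds
    · have htop : Tendsto (fun s : ℝ => b * s) atTop atTop :=
        Tendsto.const_mul_atTop hb0 tendsto_id
      have hcomp : Tendsto (fun s : ℝ => f (b * s) / (b * s) ^ (2 * α)) atTop (nhds v) :=
        hlim.comp htop
      have h1 : Tendsto (fun s : ℝ => f (b * s) / (b * s) ^ (2 * α) * b ^ (2 * α)) atTop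
          (nhds (v * b ^ (2 * α))) := hcomp.mul_const _
      refine h1.congr' ?_
      filter_upwards [eventually_gt_atTop 0] with s hs
      rw [Real.mul_rpow hb0.le hs.le]
      have hbne : b ^ (2 * α) ≠ 0 := ne_of_gt (Real.rpow_pos_of_pos hb0 _)
      have hsne : s ^ (2 * α) ≠ 0 := ne_of_gt (Real.rpow_pos_of_pos hs _)
      field_simp
  have h1 := haux a ha0.le
  have h2 := haux (a - 1) (by linarith)
  -- numerator and denominator limits
  have hN : Tendsto (fun s : ℝ =>
      f s / s ^ (2 * α) + f (a * s) / s ^ (2 * α) - f ((a - 1) * s) / s ^ (2 * α)) atTop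
      (nhds (v + v * a ^ (2 * α) - v * (a - 1) ^ (2 * α))) := (hlim.add h1).sub h2
  have hsqrt : Tendsto (fun s : ℝ =>
      Real.sqrt ((f s / s ^ (2 * α)) * (f (a * s) / s ^ (2 * α)))) atTop
      (nhds (Real.sqrt (v * (v * a ^ (2 * α))))) :=
    (Real.continuous_sqrt.tendsto _).comp (hlim.mul h1)
  have hD : Tendsto (fun s : ℝ =>
      2 * Real.sqrt ((f s / s ^ (2 * α)) * (f (a * s) / s ^ (2 * α)))) atTop
      (nhds (2 * Real.sqrt (v * (v * a ^ (2 * α))))) := hsqrt.const_mul 2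
  have h2α : a ^ (2 * α) = (a ^ α) ^ 2 := by
    rw [mul_comm, Real.rpow_mul ha0.le, Real.rpow_two]
  have hDval : Real.sqrt (v * (v * a ^ (2 * α))) = v * a ^ α := by
    have : v * (v * a ^ (2 * α)) = (v * a ^ α) ^ 2 := by rw [h2α]; ring
    rw [this, Real.sqrt_sq (by positivity)]
  have haα : (0:ℝ) < a ^ α := Real.rpow_pos_of_pos ha0 _
  have hne : 2 * Real.sqrt (v * (v * a ^ (2 * α))) ≠ 0 := by
    rw [hDval]; positivity
  have hdiv := hN.div hD hne
  -- identify the limit value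
  have hval : (v + v * a ^ (2 * α) - v * (a - 1) ^ (2 * α)) /
      (2 * Real.sqrt (v * (v * a ^ (2 * α)))) =
      (1 + a ^ (2 * α) - (a - 1) ^ (2 * α)) / (2 * a ^ α) := by
    rw [hDval]
    rw [show v + v * a ^ (2 * α) - v * (a - 1) ^ (2 * α)
        = v * (1 + a ^ (2 * α) - (a - 1) ^ (2 * α)) by ring,
      show (2 : ℝ) * (v * a ^ α) = v * (2 * a ^ α) by ring]
    exact mul_div_mul_left _ _ (ne_of_gt hv)
  rw [← hval]
  refine hdiv.congr' ?_
  filter_upwards [eventually_ge_atTop (1:ℝ)] with s hs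
  have hs0 : (0:ℝ) < s := lt_of_lt_of_le one_pos hs
  have hsa : s ≤ a * s := le_mul_of_one_le_left hs0.le ha
  have hvar : variance (fun ω => Y (a * s) ω - Y s ω) μ = f ((a - 1) * s) := by
    rw [hstat s (a * s) hs0.le hsa, hf]
    ring_nf
  have hcov : cov μ (Y s) (Y (a * s)) = (f s + f (a * s) - f ((a - 1) * s)) / 2 := by
    rw [cov_eq_half μ _ _ (hmem s hs0.le) (hmem (a * s) (by positivity)), hvar]
  set c : ℝ := s ^ (2 * α) with hc
  have hc0 : (0:ℝ) < c := Real.rpow_pos_of_pos hs0 _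
  have hF : (0:ℝ) ≤ f s * f (a * s) :=
    mul_nonneg (variance_nonneg _ _) (variance_nonneg _ _)
  have hsq : Real.sqrt ((f s / c) * (f (a * s) / c))
      = Real.sqrt (f s * f (a * s)) / c := by
    rw [show (f s / c) * (f (a * s) / c) = (f s * f (a * s)) / c ^ 2 by ring,
      Real.sqrt_div hF, Real.sqrt_sq hc0.le]
  simp only [Pi.div_apply]
  rw [hsq]
  show (f s / c + f (a * s) / c - f ((a - 1) * s) / c) /
      (2 * (Real.sqrt (f s * f (a * s)) / c)) = corr μ (Y s) (Y (a * s))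
  rw [corr, hcov, hf]
  rw [show f s / c + f (a * s) / c - f ((a - 1) * s) / c
      = (f s + f (a * s) - f ((a - 1) * s)) / c by ring,
    mul_div_assoc' 2 _ c, div_div_div_cancel_right₀ (ne_of_gt hc0), div_div]
end

section
/- Suppose a square-integrable process H(t,x), t ≥ 0, x ∈ ℝ, satisfies the covariance-to-variance reduction, has Brownian spatial increments in the sense Var(H(t,x) − H(t,0)) = |x| for all t, x, and satisfies lim_{s→∞} s^{-2/3} Var H(s,0) = v > 0. Then for all fixed x, y ∈ ℝ and a ≥ 1, lim_{s→∞} Corr(H(s,x), H(as,y)) = (1 + a^{2/3} − (a−1)^{2/3})/(2a^{1/3}). -/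
open MeasureTheory ProbabilityTheory Filter
open scoped RealInnerProductSpace

section helpers
variable {Ω : Type*} [MeasurableSpace Ω] {μ : Measure Ω} [IsProbabilityMeasure μ] {X Y : Ω → ℝ}

noncomputable def ctrLp (μ : Measure Ω) [IsProbabilityMeasure μ] {X : Ω → ℝ}
    (hX : MemLp X 2 μ) : Lp ℝ 2 μ :=
  (hX.sub (memLp_const (∫ ω', X ω' ∂μ))).toLp (fun ω => X ω - ∫ ω', X ω' ∂μ)

lemma ctrLp_coe (hX : MemLp X 2 μ) :
    (ctrLp μ hX : Ω → ℝ) =ᵐ[μ] fun ω => X ω - ∫ ω', X ω' ∂μ :=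
  MemLp.coeFn_toLp _

lemma inner_ctrLp (hX : MemLp X 2 μ) (hY : MemLp Y 2 μ) :
    ⟪ctrLp μ hX, ctrLp μ hY⟫ = cov μ X Y := by
  rw [L2.inner_def, cov]
  refine integral_congr_ae ?_
  filter_upwards [ctrLp_coe hX, ctrLp_coe hY] with ω h1 h2
  simp [h1, h2, mul_comm]

lemma norm_ctrLp_sq (hX : MemLp X 2 μ) : ‖ctrLp μ hX‖ ^ 2 = variance X μ := by
  rw [← real_inner_self_eq_norm_sq, inner_ctrLp hX hX, variance_eq_integral hX.aestronglyMeasurable.aemeasurable, cov]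
  refine integral_congr_ae (ae_of_all _ fun ω => ?_)
  simp [sq]

lemma norm_ctrLp (hX : MemLp X 2 μ) : ‖ctrLp μ hX‖ = Real.sqrt (variance X μ) := by
  rw [← norm_ctrLp_sq hX, Real.sqrt_sq (norm_nonneg _)]

lemma abs_cov_le (hX : MemLp X 2 μ) (hY : MemLp Y 2 μ) :
    |cov μ X Y| ≤ Real.sqrt (variance X μ) * Real.sqrt (variance Y μ) := by
  rw [← inner_ctrLp hX hY, ← norm_ctrLp hX, ← norm_ctrLp hY]
  exact abs_real_inner_le_norm _ _

lemma variance_add_expand (hX : MemLp X 2 μ) (hY : MemLp Y 2 μ) :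
    variance (fun ω => X ω + Y ω) μ
      = variance X μ + 2 * cov μ X Y + variance Y μ := by
  have hXY : MemLp (fun ω => X ω + Y ω) 2 μ := hX.add hY
  have hadd : ctrLp μ hXY = ctrLp μ hX + ctrLp μ hY := by
    ext1
    filter_upwards [ctrLp_coe hXY, ctrLp_coe hX, ctrLp_coe hY,
      Lp.coeFn_add (ctrLp μ hX) (ctrLp μ hY)] with ω h0 h1 h2 h3
    rw [h0, h3, Pi.add_apply, h1, h2,
      integral_add (hX.integrable one_le_two) (hY.integrable one_le_two)]
    ring
  have := norm_ctrLp_sq hXY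
  rw [hadd, norm_add_sq_real, norm_ctrLp_sq hX, norm_ctrLp_sq hY, inner_ctrLp hX hY] at this
  linarith

lemma abs_variance_add_sub (hX : MemLp X 2 μ) (hY : MemLp Y 2 μ) :
    |variance (fun ω => X ω + Y ω) μ - variance X μ|
      ≤ 2 * Real.sqrt (variance X μ) * Real.sqrt (variance Y μ) + variance Y μ := by
  rw [variance_add_expand hX hY]
  have h1 := abs_cov_le hX hY
  have h2 := variance_nonneg Y μ
  calc |variance X μ + 2 * cov μ X Y + variance Y μ - variance X μ|
      ≤ 2 * |cov μ X Y| + variance Y μ := by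
        rw [abs_le]; constructor <;> [skip; skip] <;> cases abs_le.mp (le_refl |cov μ X Y|) <;>
          nlinarith [abs_nonneg (cov μ X Y), neg_abs_le (cov μ X Y), le_abs_self (cov μ X Y)]
    _ ≤ 2 * (Real.sqrt (variance X μ) * Real.sqrt (variance Y μ)) + variance Y μ := by
        nlinarith
    _ = _ := by ring

end helpers

/-- Aging with general fixed end-points for a field with the covariance-to-variance
reduction, Brownian spatial increments and KPZ variance growth. -/
theorem aging_general_endpoints {Ω : Type*} [MeasurableSpace Ω] (μ : Measure Ω)
    [IsProbabilityMeasure μ] (H : ℝ → ℝ → Ω → ℝ)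
    (hmem : ∀ t x : ℝ, MemLp (H t x) 2 μ)
    (hCVTV : ∀ s t x y : ℝ, 0 ≤ s → s ≤ t →
      cov μ (H s x) (H t y) =
        (variance (H s x) μ + variance (H t y) μ - variance (H (t - s) (y - x)) μ) / 2)
    (hBM : ∀ t x : ℝ, 0 ≤ t → variance (fun ω => H t x ω - H t 0 ω) μ = |x|)
    (v : ℝ) (hv : 0 < v)
    (hlim : Tendsto (fun s : ℝ => variance (H s 0) μ / s ^ ((2:ℝ)/3)) atTop (nhds v)) :
    ∀ x y : ℝ, ∀ a : ℝ, 1 ≤ a →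
      Tendsto (fun s : ℝ => corr μ (H s x) (H (a * s) y)) atTop
        (nhds ((1 + a ^ ((2:ℝ)/3) - (a - 1) ^ ((2:ℝ)/3)) / (2 * a ^ ((1:ℝ)/3)))) := by
  intro x y a ha
  have h23 : (0:ℝ) < 2/3 := by norm_num
  have hpow_top : Tendsto (fun s : ℝ => s ^ ((2:ℝ)/3)) atTop atTop :=
    tendsto_rpow_atTop h23
  -- Step 1: for each fixed x, Var(H s x)/s^{2/3} → v
  have hVx : ∀ z : ℝ, Tendsto (fun s : ℝ => variance (H s z) μ / s ^ ((2:ℝ)/3)) atTop (nhds v) := by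
    intro z
    have herr : Tendsto (fun s : ℝ =>
        (2 * Real.sqrt (variance (H s 0) μ) * Real.sqrt |z| + |z|) / s ^ ((2:ℝ)/3))
        atTop (nhds 0) := by
      have h1 : Tendsto (fun s : ℝ =>
          2 * Real.sqrt (variance (H s 0) μ) * Real.sqrt |z| / s ^ ((2:ℝ)/3))
          atTop (nhds 0) := by
        have hq : Tendsto (fun s : ℝ =>
            Real.sqrt (variance (H s 0) μ / s ^ ((2:ℝ)/3))) atTop (nhds (Real.sqrt v)) :=
          hlim.sqrt
        have hq2 : Tendsto (fun s : ℝ =>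
            Real.sqrt (variance (H s 0) μ / s ^ ((2:ℝ)/3)) * (2 * Real.sqrt |z|) / s ^ ((1:ℝ)/3))
            atTop (nhds 0) :=
          Tendsto.div_atTop (hq.mul_const _) (tendsto_rpow_atTop (by norm_num))
        refine hq2.congr' ?_
        filter_upwards [eventually_gt_atTop (0:ℝ)] with s hs
        have hsqrt : Real.sqrt (s ^ ((2:ℝ)/3)) = s ^ ((1:ℝ)/3) := by
          rw [Real.sqrt_eq_rpow, ← Real.rpow_mul hs.le]
          norm_num
        rw [Real.sqrt_div (variance_nonneg _ _), hsqrt]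
        have h13 : s ^ ((1:ℝ)/3) ≠ 0 := (Real.rpow_pos_of_pos hs _).ne'
        have hmul : s ^ ((1:ℝ)/3) * s ^ ((1:ℝ)/3) = s ^ ((2:ℝ)/3) := by
          rw [← Real.rpow_add hs]; norm_num
        field_simp
        rw [← hmul]; ring
      have h2 : Tendsto (fun s : ℝ => |z| / s ^ ((2:ℝ)/3)) atTop (nhds 0) :=
        Tendsto.div_atTop tendsto_const_nhds hpow_top
      have := h1.add h2
      rw [add_zero] at this
      refine this.congr fun s => ?_
      rw [← add_div]
    have hbound : ∀ᶠ s : ℝ in atTop,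
        |variance (H s z) μ / s ^ ((2:ℝ)/3) - variance (H s 0) μ / s ^ ((2:ℝ)/3)|
          ≤ (2 * Real.sqrt (variance (H s 0) μ) * Real.sqrt |z| + |z|) / s ^ ((2:ℝ)/3) := by
      filter_upwards [eventually_gt_atTop (0:ℝ)] with s hs
      have hspos : (0:ℝ) < s ^ ((2:ℝ)/3) := Real.rpow_pos_of_pos hs _
      have key : |variance (H s z) μ - variance (H s 0) μ|
          ≤ 2 * Real.sqrt (variance (H s 0) μ) * Real.sqrt |z| + |z| := by
        have hD : MemLp (fun ω => H s z ω - H s 0 ω) 2 μ := (hmem s z).sub (hmem s 0)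
        have heq : variance (H s z) μ
            = variance (fun ω => H s 0 ω + (H s z ω - H s 0 ω)) μ := by
          congr 1; funext ω; ring
        rw [heq]
        have := abs_variance_add_sub (hmem s 0) hD
        rwa [hBM s z hs.le] at this
      rw [← sub_div, abs_div, abs_of_pos hspos]
      gcongr
    -- conclude via squeeze
    have hdiff : Tendsto (fun s : ℝ =>
        variance (H s z) μ / s ^ ((2:ℝ)/3) - variance (H s 0) μ / s ^ ((2:ℝ)/3))
        atTop (nhds 0) :=
      squeeze_zero_norm' hbound herr
    have := hlim.add hdiff
    rw [add_zero] at this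
    refine this.congr fun s => ?_
    ring
  have ha0 : (0:ℝ) < a := lt_of_lt_of_le one_pos ha
  -- Step 2: scaled variance limits
  have hVc : ∀ c : ℝ, 0 ≤ c → ∀ z : ℝ,
      Tendsto (fun s : ℝ => variance (H (c * s) z) μ / s ^ ((2:ℝ)/3)) atTop
        (nhds (v * c ^ ((2:ℝ)/3))) := by
    intro c hc z
    rcases hc.eq_or_lt with rfl | hcpos
    · simp only [zero_mul, Real.zero_rpow (by norm_num : ((2:ℝ)/3) ≠ 0), mul_zero]
      exact Tendsto.div_atTop tendsto_const_nhds hpow_top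
    · have hcomp : Tendsto (fun s : ℝ => variance (H (c * s) z) μ / (c * s) ^ ((2:ℝ)/3))
          atTop (nhds v) :=
        (hVx z).comp (Tendsto.const_mul_atTop hcpos tendsto_id)
      have := hcomp.mul_const (c ^ ((2:ℝ)/3))
      have hre : Tendsto (fun s : ℝ =>
          variance (H (c * s) z) μ / (c * s) ^ ((2:ℝ)/3) * c ^ ((2:ℝ)/3)) atTop
          (nhds (v * c ^ ((2:ℝ)/3))) := this
      refine hre.congr' ?_
      filter_upwards [eventually_gt_atTop (0:ℝ)] with s hs
      rw [Real.mul_rpow hcpos.le hs.le]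
      have h1 : c ^ ((2:ℝ)/3) ≠ 0 := (Real.rpow_pos_of_pos hcpos _).ne'
      have h2 : s ^ ((2:ℝ)/3) ≠ 0 := (Real.rpow_pos_of_pos hs _).ne'
      field_simp
  -- Step 3: numerator limit
  have hnum : Tendsto (fun s : ℝ => cov μ (H s x) (H (a * s) y) / s ^ ((2:ℝ)/3)) atTop
      (nhds ((v + v * a ^ ((2:ℝ)/3) - v * (a - 1) ^ ((2:ℝ)/3)) / 2)) := by
    have hT := (((hVx x).add (hVc a ha0.le y)).sub (hVc (a - 1) (by linarith) (y - x))).div_const 2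
    refine hT.congr' ?_
    filter_upwards [eventually_ge_atTop (0:ℝ)] with s hs
    have hcv := hCVTV s (a * s) x y hs (le_mul_of_one_le_left hs ha)
    have hrw : a * s - s = (a - 1) * s := by ring
    rw [hrw] at hcv
    rw [hcv]
    ring
  -- Step 4: denominator limit
  have hden : Tendsto (fun s : ℝ =>
      Real.sqrt (variance (H s x) μ * variance (H (a * s) y) μ) / s ^ ((2:ℝ)/3)) atTop
      (nhds (v * a ^ ((1:ℝ)/3))) := by
    have hT := ((hVx x).mul (hVc a ha0.le y)).sqrt
    have hval : Real.sqrt (v * (v * a ^ ((2:ℝ)/3))) = v * a ^ ((1:ℝ)/3) := by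
      have : v * (v * a ^ ((2:ℝ)/3)) = (v * a ^ ((1:ℝ)/3)) ^ 2 := by
        have : (a ^ ((1:ℝ)/3)) ^ (2:ℕ) = a ^ ((2:ℝ)/3) := by
          rw [← Real.rpow_natCast (a ^ ((1:ℝ)/3)) 2, ← Real.rpow_mul ha0.le]
          norm_num
        rw [mul_pow, this]; ring
      rw [this, Real.sqrt_sq (by positivity)]
    rw [hval] at hT
    refine hT.congr' ?_
    filter_upwards [eventually_gt_atTop (0:ℝ)] with s hs
    have hsqrt : Real.sqrt (s ^ ((2:ℝ)/3) * s ^ ((2:ℝ)/3)) = s ^ ((2:ℝ)/3) :=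
      Real.sqrt_mul_self (Real.rpow_pos_of_pos hs _).le
    rw [div_mul_div_comm, Real.sqrt_div (mul_nonneg (variance_nonneg _ _) (variance_nonneg _ _)), hsqrt]
  -- Step 5: conclusion
  have hdne : v * a ^ ((1:ℝ)/3) ≠ 0 := by positivity
  have hfin := hnum.div hden hdne
  have hval : (v + v * a ^ ((2:ℝ)/3) - v * (a - 1) ^ ((2:ℝ)/3)) / 2 / (v * a ^ ((1:ℝ)/3))
      = (1 + a ^ ((2:ℝ)/3) - (a - 1) ^ ((2:ℝ)/3)) / (2 * a ^ ((1:ℝ)/3)) := by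
    have h13 : a ^ ((1:ℝ)/3) ≠ 0 := (Real.rpow_pos_of_pos ha0 _).ne'
    field_simp
  rw [hval] at hfin
  refine hfin.congr' ?_
  filter_upwards [eventually_gt_atTop (0:ℝ)] with s hs
  have hc : s ^ ((2:ℝ)/3) ≠ 0 := (Real.rpow_pos_of_pos hs _).ne'
  rw [corr]
  rcases eq_or_ne (Real.sqrt (variance (H s x) μ * variance (H (a * s) y) μ)) 0 with h0 | h0
  · simp only [Pi.div_apply, h0, div_zero, zero_div]
  · rw [Pi.div_apply]; field_simp
end

section
/- Let B be a standard one-dimensional Brownian motion started at x ∈ ℝ, and let p(t,y) = (2πt)^{-1/2} e^{-y²/(2t)}. Then for all t ≥ 0, E[|B_t|] = |x| + ∫₀ᵗ p(s,x) ds. -/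
open MeasureTheory ProbabilityTheory Real Filter Set Topology


noncomputable def Tf : ℝ → ℝ := fun a => ∫ u in Set.Ioi a, Real.exp (-u^2/2)

lemma integrable_gauss1 : Integrable (fun u : ℝ => Real.exp (-u^2/2)) := by
  have := integrable_exp_neg_mul_sq (b := (1:ℝ)/2) (by norm_num)
  refine this.congr (Eventually.of_forall fun u => ?_)
  ring_nf

lemma Tf_split {a b : ℝ} (h : a ≤ b) :
    (∫ u in Set.Ioc a b, Real.exp (-u^2/2)) + Tf b = Tf a := by
  rw [Tf, Tf, ← setIntegral_union (Ioc_disjoint_Ioi le_rfl) measurableSet_Ioi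
      integrable_gauss1.integrableOn integrable_gauss1.integrableOn,
    Ioc_union_Ioi_eq_Ioi h]

lemma Tf_eq (a : ℝ) : Tf a = Tf 0 - ∫ u in (0:ℝ)..a, Real.exp (-u^2/2) := by
  rcases le_or_gt 0 a with h | h
  · rw [intervalIntegral.integral_of_le h, ← Tf_split h]; ring
  · rw [intervalIntegral.integral_symm, intervalIntegral.integral_of_le h.le, ← Tf_split h.le]
    ring

lemma Tf_hasDerivAt (a : ℝ) : HasDerivAt Tf (-Real.exp (-a^2/2)) a := by
  have hc : Continuous fun u : ℝ => Real.exp (-u^2/2) := by continuity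
  have h : HasDerivAt (fun b => ∫ u in (0:ℝ)..b, Real.exp (-u^2/2)) (Real.exp (-a^2/2)) a :=
    intervalIntegral.integral_hasDerivAt_right (hc.intervalIntegrable _ _)
      hc.stronglyMeasurable.stronglyMeasurableAtFilter hc.continuousAt
  have h2 : HasDerivAt (fun b => Tf 0 - ∫ u in (0:ℝ)..b, Real.exp (-u^2/2))
      (0 - Real.exp (-a^2/2)) a := (hasDerivAt_const _ _).sub h
  rw [zero_sub] at h2
  exact h2.congr_of_eventuallyEq (Eventually.of_forall fun b => Tf_eq b)

lemma Tf_tendsto : Tendsto Tf atTop (𝓝 0) := by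
  have h := intervalIntegral_tendsto_integral_Ioi (0:ℝ) integrable_gauss1.integrableOn tendsto_id
  have h2 : Tendsto (fun a => Tf 0 - ∫ u in (0:ℝ)..a, Real.exp (-u^2/2)) atTop
      (𝓝 (Tf 0 - Tf 0)) := tendsto_const_nhds.sub (by exact h)
  rw [sub_self] at h2
  exact h2.congr fun a => (Tf_eq a).symm

lemma Tf_nonneg (a : ℝ) : 0 ≤ Tf a :=
  setIntegral_nonneg measurableSet_Ioi fun u _ => (Real.exp_pos _).le




section
variable {t : ℝ}

lemma integrable_E (ht : 0 < t) (c : ℝ) :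
    Integrable (fun z : ℝ => Real.exp (-(z+c)^2/(2*t))) := by
  have h := integrable_exp_neg_mul_sq (b := 1/(2*t)) (by positivity)
  have h2 : Integrable (fun w : ℝ => Real.exp (-w^2/(2*t))) :=
    h.congr (Eventually.of_forall fun w => by simp only []; rw [show -w^2/(2*t) = -(1/(2*t)) * w^2 by ring])
  have h3 := h2.comp_sub_right (-c)
  simpa [sub_neg_eq_add] using h3

lemma integrable_mulE (ht : 0 < t) (c : ℝ) :
    Integrable (fun z : ℝ => (z+c) * Real.exp (-(z+c)^2/(2*t))) := by
  have h := integrable_mul_exp_neg_mul_sq (b := 1/(2*t)) (by positivity)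
  have h2 : Integrable (fun w : ℝ => w * Real.exp (-w^2/(2*t))) :=
    h.congr (Eventually.of_forall fun w => by simp only []; rw [show -w^2/(2*t) = -(1/(2*t)) * w^2 by ring])
  have h3 := h2.comp_sub_right (-c)
  simpa [sub_neg_eq_add] using h3

lemma tendsto_E (ht : 0 < t) (c : ℝ) :
    Tendsto (fun z : ℝ => Real.exp (-(z+c)^2/(2*t))) atTop (𝓝 0) := by
  apply Real.tendsto_exp_atBot.comp
  have h1 : Tendsto (fun z : ℝ => z + c) atTop atTop :=
    tendsto_atTop_add_const_right _ c tendsto_id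
  have h2 : Tendsto (fun z : ℝ => (z+c)^2) atTop atTop :=
    (tendsto_pow_atTop two_ne_zero).comp h1
  have h3 : Tendsto (fun z : ℝ => -(z+c)^2) atTop atBot := tendsto_neg_atTop_atBot.comp h2
  exact h3.atBot_div_const (by positivity)

lemma deriv_E (ht : 0 < t) (c : ℝ) (z : ℝ) :
    HasDerivAt (fun z : ℝ => -t * Real.exp (-(z+c)^2/(2*t)))
      ((z+c) * Real.exp (-(z+c)^2/(2*t))) z := by
  have hid : HasDerivAt (fun z : ℝ => z + c) 1 z := (hasDerivAt_id z).add_const c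
  have hexp := (((hid.pow 2).neg.div_const (2*t)).exp).const_mul (-t)
  have ht' : t ≠ 0 := ht.ne'
  refine hexp.congr_deriv ?_
  simp only [Pi.neg_apply, Pi.pow_apply]
  field_simp
  ring

lemma int_Ioi_mulE (ht : 0 < t) (c : ℝ) :
    ∫ z in Set.Ioi (0:ℝ), (z+c) * Real.exp (-(z+c)^2/(2*t)) = t * Real.exp (-c^2/(2*t)) := by
  rw [integral_Ioi_of_hasDerivAt_of_tendsto
    (Continuous.continuousWithinAt (by continuity))
    (fun z _ => deriv_E ht c z) (integrable_mulE ht c).integrableOn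
    (by simpa using (tendsto_E ht c).const_mul (-t))]
  simp

lemma deriv_TE (ht : 0 < t) (c : ℝ) (z : ℝ) :
    HasDerivAt (fun z : ℝ => -Real.sqrt t * Tf ((z+c)/Real.sqrt t))
      (Real.exp (-(z+c)^2/(2*t))) z := by
  have hst : Real.sqrt t ≠ 0 := (Real.sqrt_pos.mpr ht).ne'
  have hin : HasDerivAt (fun z : ℝ => (z+c)/Real.sqrt t) (1/Real.sqrt t) z := by
    simpa using ((hasDerivAt_id z).add_const c).div_const (Real.sqrt t)
  have hT := ((Tf_hasDerivAt ((z+c)/Real.sqrt t)).comp z hin).const_mul (-Real.sqrt t)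
  refine hT.congr_deriv ?_
  have hsq : ((z+c)/Real.sqrt t)^2 = (z+c)^2/t := by
    rw [div_pow, Real.sq_sqrt ht.le]
  rw [hsq]
  have : -(z+c)^2/t/2 = -(z+c)^2/(2*t) := by ring
  rw [show -((z+c)^2/t)/2 = -(z+c)^2/(2*t) by ring]
  field_simp

lemma tendsto_TE (ht : 0 < t) (c : ℝ) :
    Tendsto (fun z : ℝ => -Real.sqrt t * Tf ((z+c)/Real.sqrt t)) atTop (𝓝 0) := by
  have h1 : Tendsto (fun z : ℝ => (z+c)/Real.sqrt t) atTop atTop :=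
    (tendsto_atTop_add_const_right _ c tendsto_id).atTop_div_const (Real.sqrt_pos.mpr ht)
  simpa using (Tf_tendsto.comp h1).const_mul (-Real.sqrt t)

lemma int_Ioi_E (ht : 0 < t) (c : ℝ) :
    ∫ z in Set.Ioi (0:ℝ), Real.exp (-(z+c)^2/(2*t))
      = Real.sqrt t * Tf (c / Real.sqrt t) := by
  rw [integral_Ioi_of_hasDerivAt_of_tendsto
    ((deriv_TE ht c 0).continuousAt.continuousWithinAt)
    (fun z _ => deriv_TE ht c z) (integrable_E ht c).integrableOn (tendsto_TE ht c)]
  simp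

lemma int_total_E (ht : 0 < t) (c : ℝ) :
    ∫ z : ℝ, Real.exp (-(z+c)^2/(2*t)) = Real.sqrt (2*π*t) := by
  rw [integral_add_right_eq_self (fun w : ℝ => Real.exp (-w^2/(2*t))) c]
  have : ∀ w : ℝ, Real.exp (-w^2/(2*t)) = Real.exp (-(1/(2*t)) * w^2) := fun w => by
    rw [show -(1/(2*t)) * w^2 = -w^2/(2*t) by ring]
  simp_rw [this, integral_gaussian]
  congr 1
  field_simp [ht.ne']

lemma int_Iio_eq (f : ℝ → ℝ) : ∫ z in Set.Iio (0:ℝ), f z = ∫ z in Set.Ioi (0:ℝ), f (-z) := by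
  rw [integral_comp_neg_Ioi]
  norm_num [integral_Iic_eq_integral_Iio]

end
section
variable {t : ℝ}

lemma int_Iio_E (ht : 0 < t) (x : ℝ) :
    ∫ z in Set.Iio (0:ℝ), Real.exp (-(z + -x)^2/(2*t))
      = Real.sqrt t * Tf (x / Real.sqrt t) := by
  rw [int_Iio_eq]
  rw [show (fun z : ℝ => Real.exp (-(-z + -x)^2/(2*t)))
      = fun z : ℝ => Real.exp (-(z+x)^2/(2*t)) by ext z; ring_nf]
  exact int_Ioi_E ht x

lemma int_Iio_mulE' (ht : 0 < t) (x : ℝ) :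
    ∫ z in Set.Iio (0:ℝ), (x - z) * Real.exp (-(z + -x)^2/(2*t))
      = t * Real.exp (-x^2/(2*t)) := by
  rw [int_Iio_eq]
  rw [show (fun z : ℝ => (x - -z) * Real.exp (-(-z + -x)^2/(2*t)))
      = fun z : ℝ => (z+x) * Real.exp (-(z+x)^2/(2*t)) by ext z; ring_nf]
  rw [int_Ioi_mulE ht x]


lemma lhs_eq (v : NNReal) (hv : v ≠ 0) (x : ℝ) (hx : 0 ≤ x) :
    ∫ z, |z| ∂(gaussianReal x v) =
      x + (2*(v:ℝ)*Real.exp (-x^2/(2*(v:ℝ))) * (Real.sqrt (2*π*(v:ℝ)))⁻¹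
        - 2*x*(Real.sqrt (2*π))⁻¹ * Tf (x / Real.sqrt (v:ℝ))) := by
  set t : ℝ := (v:ℝ) with htdef
  have ht : 0 < t := NNReal.coe_pos.mpr (pos_iff_ne_zero.mpr hv)
  set c : ℝ := (Real.sqrt (2*π*t))⁻¹ with hcdef
  have hsp : 0 < Real.sqrt (2*π*t) := Real.sqrt_pos.mpr (by positivity)
  have hc0 : 0 ≤ c := by positivity
  set E : ℝ → ℝ := fun z => Real.exp (-(z + -x)^2/(2*t)) with hEdef
  have hpdf : ∀ z, gaussianPDFReal x v z = c * E z := by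
    intro z
    rw [gaussianPDFReal, ← htdef, hEdef, sub_eq_add_neg]
  have hE : Integrable E := integrable_E ht (-x)
  have hmE : Integrable (fun z => (z + -x) * E z) := integrable_mulE ht (-x)
  have step1 : ∫ z, |z| ∂(gaussianReal x v) = ∫ z, gaussianPDFReal x v z * |z| := by
    rw [gaussianReal_of_var_ne_zero x hv]
    have hmeas : Measurable fun z => (gaussianPDFReal x v z).toNNReal :=
      (measurable_gaussianPDFReal x v).real_toNNReal
    have heq : (volume.withDensity (gaussianPDF x v))
        = volume.withDensity (fun z => ((gaussianPDFReal x v z).toNNReal : ENNReal)) := rfl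
    rw [heq, integral_withDensity_eq_integral_smul hmeas]
    congr 1 with z
    rw [NNReal.smul_def, Real.coe_toNNReal _ (gaussianPDFReal_nonneg x v z), smul_eq_mul]
  have hint : Integrable (fun z => gaussianPDFReal x v z * |z|) := by
    refine Integrable.mono' ((hmE.abs.const_mul c).add (hE.const_mul (c*x)))
      (((measurable_gaussianPDFReal x v).mul measurable_abs).aestronglyMeasurable)
      (Eventually.of_forall fun z => ?_)
    simp only [Pi.add_apply]
    have hE0 : 0 < E z := Real.exp_pos _
    have habs : |z| ≤ |z + -x| + x := by
      calc |z| = |(z + -x) + x| := by ring_nf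
      _ ≤ |z + -x| + |x| := abs_add_le _ _
      _ = |z + -x| + x := by rw [abs_of_nonneg hx]
    rw [Real.norm_eq_abs,
      abs_of_nonneg (mul_nonneg (gaussianPDFReal_nonneg x v z) (abs_nonneg z)),
      hpdf z, abs_mul, abs_of_pos hE0]
    nlinarith [mul_le_mul_of_nonneg_left habs (mul_nonneg hc0 hE0.le), hE0.le, hc0]
  have hIoiE : ∫ z in Set.Ioi (0:ℝ), E z
      = Real.sqrt (2*π*t) - Real.sqrt t * Tf (x / Real.sqrt t) := by
    have hsplit := intervalIntegral.integral_Iio_add_Ici (b := (0:ℝ)) hE.integrableOn hE.integrableOn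
    rw [integral_Ici_eq_integral_Ioi] at hsplit
    have h1 : ∫ z in Set.Iio (0:ℝ), E z = Real.sqrt t * Tf (x / Real.sqrt t) := int_Iio_E ht x
    have h2 : ∫ z, E z = Real.sqrt (2*π*t) := int_total_E ht (-x)
    linarith
  have hIci : ∫ z in Set.Ici (0:ℝ), gaussianPDFReal x v z * |z|
      = c * (t * Real.exp (-x^2/(2*t)))
        + c * x * (Real.sqrt (2*π*t) - Real.sqrt t * Tf (x / Real.sqrt t)) := by
    rw [integral_Ici_eq_integral_Ioi]
    have hcg : ∀ z ∈ Set.Ioi (0:ℝ), gaussianPDFReal x v z * |z|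
        = c * ((z + -x) * E z) + (c*x) * E z := by
      intro z hz
      rw [hpdf z, abs_of_pos hz]
      ring
    rw [setIntegral_congr_fun measurableSet_Ioi hcg,
      integral_add ((hmE.integrableOn).const_mul c) ((hE.integrableOn).const_mul (c*x)),
      integral_const_mul, integral_const_mul, int_Ioi_mulE ht (-x), hIoiE,
      show (-x:ℝ)^2 = x^2 by ring]
  have hmE' : Integrable (fun z => (x - z) * E z) :=
    hmE.neg.congr (Eventually.of_forall fun z => by simp only [Pi.neg_apply]; ring)
  have hIio : ∫ z in Set.Iio (0:ℝ), gaussianPDFReal x v z * |z|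
      = c * (t * Real.exp (-x^2/(2*t))) - c * x * (Real.sqrt t * Tf (x / Real.sqrt t)) := by
    have hcg : ∀ z ∈ Set.Iio (0:ℝ), gaussianPDFReal x v z * |z|
        = c * ((x - z) * E z) - (c*x) * E z := by
      intro z hz
      rw [hpdf z, abs_of_neg hz]
      ring
    rw [setIntegral_congr_fun measurableSet_Iio hcg,
      integral_sub ((hmE'.integrableOn).const_mul c) ((hE.integrableOn).const_mul (c*x)),
      integral_const_mul, integral_const_mul, int_Iio_mulE' ht x, int_Iio_E ht x]
  have hsplit2 := intervalIntegral.integral_Iio_add_Ici (b := (0:ℝ)) hint.integrableOn hint.integrableOn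
  rw [step1, ← hsplit2, hIio, hIci]
  have hcs : c * Real.sqrt (2*π*t) = 1 := inv_mul_cancel₀ hsp.ne'
  have hct : c * Real.sqrt t = (Real.sqrt (2*π))⁻¹ := by
    have hst : Real.sqrt t ≠ 0 := (Real.sqrt_pos.mpr ht).ne'
    rw [hcdef, show 2*π*t = (2*π)*t by ring, Real.sqrt_mul (by positivity) t]
    field_simp
  linear_combination x * hcs + (-2*x*Tf (x / Real.sqrt t)) * hct

end

noncomputable def Gf (x s : ℝ) : ℝ :=
  2*(Real.sqrt (2*π))⁻¹*Real.sqrt s*Real.exp (-x^2/(2*s))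
    - 2*x*(Real.sqrt (2*π))⁻¹ * Tf (x/Real.sqrt s)

lemma Gf_hasDerivAt (x : ℝ) {s : ℝ} (hs : 0 < s) :
    HasDerivAt (Gf x) ((Real.sqrt (2*π*s))⁻¹ * Real.exp (-x^2/(2*s))) s := by
  have hss : Real.sqrt s ≠ 0 := (Real.sqrt_pos.mpr hs).ne'
  have h2π : Real.sqrt (2*π) ≠ 0 := (Real.sqrt_pos.mpr (by positivity)).ne'
  have hsq : HasDerivAt Real.sqrt (1/(2*Real.sqrt s)) s := Real.hasDerivAt_sqrt hs.ne'
  have hinner : HasDerivAt (fun s : ℝ => -x^2/(2*s)) ((-x^2/2) * (-(s^2)⁻¹)) s := by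
    have h1 := (hasDerivAt_inv hs.ne').const_mul (-x^2/2)
    refine h1.congr_of_eventuallyEq (Eventually.of_forall fun u => ?_)
    ring
  have hexp := hinner.exp
  have hterm1 := (hsq.mul hexp).const_mul (2*(Real.sqrt (2*π))⁻¹)
  have hin2 : HasDerivAt (fun s : ℝ => x/Real.sqrt s)
      (x * (-(1/(2*Real.sqrt s))/(Real.sqrt s)^2)) s := by
    have := (hsq.inv hss).const_mul x
    refine this.congr_of_eventuallyEq (Eventually.of_forall fun u => ?_)
    simp [div_eq_mul_inv]
  have hT := ((Tf_hasDerivAt (x/Real.sqrt s)).comp s hin2).const_mul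
    (2*x*(Real.sqrt (2*π))⁻¹)
  rw [show (fun y : ℝ => 2*(Real.sqrt (2*π))⁻¹ * (Real.sqrt * fun s : ℝ => Real.exp (-x^2/(2*s))) y)
      = fun s : ℝ => 2*(Real.sqrt (2*π))⁻¹*Real.sqrt s*Real.exp (-x^2/(2*s)) by
        ext u; simp only [Pi.mul_apply]; ring] at hterm1
  have htot := hterm1.sub hT
  have htot' : HasDerivAt (Gf x)
      (2*(Real.sqrt (2*π))⁻¹ * (1/(2*Real.sqrt s) * Real.exp (-x^2/(2*s))
          + Real.sqrt s * (Real.exp (-x^2/(2*s)) * (-x^2/2 * -(s^2)⁻¹)))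
        - 2*x*(Real.sqrt (2*π))⁻¹ * (-Real.exp (-(x/Real.sqrt s)^2/2)
          * (x * (-(1/(2*Real.sqrt s))/(Real.sqrt s)^2)))) s := htot
  convert htot' using 1
  rw [div_pow, Real.sq_sqrt hs.le, show -(x^2/s)/2 = -x^2/(2*s) by ring,
    show 2*π*s = (2*π)*s by ring, Real.sqrt_mul (by positivity) s]
  set u := Real.sqrt s with hu
  rw [show s = u^2 by rw [hu, Real.sq_sqrt hs.le]]
  have hu0 : u ≠ 0 := hss
  field_simp
  ring

lemma Gf_tendsto {x : ℝ} (hx : 0 ≤ x) : Tendsto (Gf x) (𝓝[>] (0:ℝ)) (𝓝 0) := by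
  have hterm1 : Tendsto (fun s : ℝ => 2*(Real.sqrt (2*π))⁻¹*Real.sqrt s*Real.exp (-x^2/(2*s)))
      (𝓝[>] (0:ℝ)) (𝓝 0) := by
    apply squeeze_zero' (Eventually.of_forall fun s => by positivity)
      (g := fun s : ℝ => 2*(Real.sqrt (2*π))⁻¹*Real.sqrt s)
    · filter_upwards [self_mem_nhdsWithin] with s hs
      have : Real.exp (-x^2/(2*s)) ≤ 1 := by
        rw [Real.exp_le_one_iff]
        have hs' : (0:ℝ) < s := hs
        have : (0:ℝ) < 2*s := by linarith
        exact div_nonpos_of_nonpos_of_nonneg (by nlinarith [sq_nonneg x]) this.le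
      nlinarith [mul_le_mul_of_nonneg_left this
        (show (0:ℝ) ≤ 2*(Real.sqrt (2*π))⁻¹*Real.sqrt s by positivity)]
    · have := ((Real.continuous_sqrt.tendsto' 0 0 Real.sqrt_zero).const_mul
        (2*(Real.sqrt (2*π))⁻¹)).mono_left (nhdsWithin_le_nhds (s := Set.Ioi (0:ℝ)))
      simpa using this
  have hterm2 : Tendsto (fun s : ℝ => 2*x*(Real.sqrt (2*π))⁻¹ * Tf (x/Real.sqrt s))
      (𝓝[>] (0:ℝ)) (𝓝 0) := by
    rcases hx.eq_or_lt with h | hx'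
    · simp [← h]
    · have hsqrt : Tendsto (fun s : ℝ => Real.sqrt s) (𝓝[>] (0:ℝ)) (𝓝[>] (0:ℝ)) := by
        rw [tendsto_nhdsWithin_iff]
        constructor
        · exact (Real.continuous_sqrt.tendsto' 0 0 Real.sqrt_zero).mono_left nhdsWithin_le_nhds
        · filter_upwards [self_mem_nhdsWithin] with s hs
          exact Real.sqrt_pos.mpr hs
      have hinv : Tendsto (fun s : ℝ => x/Real.sqrt s) (𝓝[>] (0:ℝ)) atTop := by
        simp_rw [div_eq_mul_inv]
        exact (tendsto_inv_nhdsGT_zero.comp hsqrt).const_mul_atTop hx'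
      have h := (Tf_tendsto.comp hinv).const_mul (2*x*(Real.sqrt (2*π))⁻¹)
      rw [mul_zero] at h
      exact h.congr fun s => by simp [Function.comp]
  have h := hterm1.sub hterm2
  rw [sub_zero] at h
  exact h

lemma q_integrableOn {t : ℝ} (ht : 0 < t) (x : ℝ) :
    IntegrableOn (fun s : ℝ => (Real.sqrt (2*π*s))⁻¹ * Real.exp (-x^2/(2*s)))
      (Set.Ioc 0 t) := by
  have hbig : IntegrableOn (fun s : ℝ => s ^ (-(1:ℝ)/2)) (Set.Ioc 0 t) := by
    have h := intervalIntegral.intervalIntegrable_rpow' (a := (0:ℝ)) (b := t)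
      (r := -(1:ℝ)/2) (by norm_num)
    rwa [intervalIntegrable_iff_integrableOn_Ioc_of_le ht.le] at h
  refine Integrable.mono' hbig ?_ ?_
  · refine AEStronglyMeasurable.mul ?_ ?_
    · exact ((measurable_const.mul measurable_id').sqrt.inv).aestronglyMeasurable
    · exact ((measurable_const.div (measurable_const.mul measurable_id')).exp).aestronglyMeasurable
  · rw [ae_restrict_iff' measurableSet_Ioc]
    refine Eventually.of_forall fun s hs => ?_
    have hs0 : 0 < s := hs.1
    have he1 : Real.exp (-x^2/(2*s)) ≤ 1 := by
      rw [Real.exp_le_one_iff]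
      exact div_nonpos_of_nonpos_of_nonneg (by nlinarith [sq_nonneg x]) (by linarith)
    have hmono : Real.sqrt s ≤ Real.sqrt (2*π*s) := by
      apply Real.sqrt_le_sqrt
      nlinarith [Real.pi_gt_three]
    have hsp : 0 < Real.sqrt s := Real.sqrt_pos.mpr hs0
    have hinv : (Real.sqrt (2*π*s))⁻¹ ≤ (Real.sqrt s)⁻¹ :=
      inv_anti₀ hsp hmono
    have hrw : s ^ (-(1:ℝ)/2) = (Real.sqrt s)⁻¹ := by
      rw [show (-(1:ℝ)/2) = -(1/2) by norm_num, Real.rpow_neg hs0.le,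
        Real.sqrt_eq_rpow]
    rw [Real.norm_eq_abs, abs_of_nonneg (by positivity), hrw]
    calc (Real.sqrt (2*π*s))⁻¹ * Real.exp (-x^2/(2*s))
        ≤ (Real.sqrt (2*π*s))⁻¹ * 1 := by
          apply mul_le_mul_of_nonneg_left he1 (by positivity)
      _ = (Real.sqrt (2*π*s))⁻¹ := mul_one _
      _ ≤ (Real.sqrt s)⁻¹ := hinv

lemma rhs_eq {t x : ℝ} (ht : 0 < t) (hx : 0 ≤ x) :
    ∫ s in Set.Ioc (0:ℝ) t, (Real.sqrt (2*π*s))⁻¹ * Real.exp (-x^2/(2*s)) = Gf x t := by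
  have hcov : AECover (volume.restrict (Set.Ioc (0:ℝ) t)) (𝓝[>] (0:ℝ))
      (fun ε => Set.Ioc ε t) :=
    MeasureTheory.aecover_Ioc_of_Ioc (tendsto_id'.mpr nhdsWithin_le_nhds) tendsto_const_nhds
  refine hcov.integral_eq_of_tendsto (Gf x t) (q_integrableOn ht x) ?_
  have hev : ∀ᶠ ε in 𝓝[>] (0:ℝ),
      (∫ s in Set.Ioc ε t, (Real.sqrt (2*π*s))⁻¹ * Real.exp (-x^2/(2*s))
          ∂(volume.restrict (Set.Ioc (0:ℝ) t)))
        = Gf x t - Gf x ε := by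
    filter_upwards [Ioo_mem_nhdsGT_of_mem (Set.left_mem_Ico.mpr ht)] with ε hε
    have hεt : ε ≤ t := hε.2.le
    have hε0 : 0 < ε := hε.1
    rw [Measure.restrict_restrict measurableSet_Ioc,
      show Set.Ioc ε t ∩ Set.Ioc (0:ℝ) t = Set.Ioc ε t by
        rw [Set.Ioc_inter_Ioc, max_eq_left hε0.le, min_self]]
    rw [← intervalIntegral.integral_of_le hεt]
    apply intervalIntegral.integral_eq_sub_of_hasDerivAt
    · intro s hs
      rw [Set.uIcc_of_le hεt] at hs
      exact Gf_hasDerivAt x (lt_of_lt_of_le hε0 hs.1)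
    · rw [intervalIntegrable_iff_integrableOn_Ioc_of_le hεt]
      exact (q_integrableOn ht x).mono_set (Set.Ioc_subset_Ioc_left hε0.le)
  have hlim : Tendsto (fun ε => Gf x t - Gf x ε) (𝓝[>] (0:ℝ)) (𝓝 (Gf x t)) := by
    have := tendsto_const_nhds (x := Gf x t) (f := 𝓝[>] (0:ℝ)) |>.sub (Gf_tendsto hx)
    rwa [sub_zero] at this
  exact hlim.congr' (hev.mono fun _ h => h.symm)

lemma key_pos (v : NNReal) (hv : v ≠ 0) {x : ℝ} (hx : 0 ≤ x) :
    ∫ z, |z| ∂(gaussianReal x v)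
      = |x| + ∫ s in Set.Ioc (0:ℝ) (v:ℝ),
          (Real.sqrt (2*π*s))⁻¹ * Real.exp (-x^2/(2*s)) := by
  have ht : 0 < (v:ℝ) := NNReal.coe_pos.mpr (pos_iff_ne_zero.mpr hv)
  rw [rhs_eq ht hx, lhs_eq v hv x hx, abs_of_nonneg hx, Gf]
  have hss : Real.sqrt (v:ℝ) ≠ 0 := (Real.sqrt_pos.mpr ht).ne'
  have h2π : Real.sqrt (2*π) ≠ 0 := (Real.sqrt_pos.mpr (by positivity)).ne'
  rw [show 2*π*(v:ℝ) = (2*π)*(v:ℝ) by ring, Real.sqrt_mul (by positivity)]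
  set u := Real.sqrt (v:ℝ) with hu
  rw [show (v:ℝ) = u^2 by rw [hu, Real.sq_sqrt ht.le]]
  field_simp

lemma gauss_abs_even (v : NNReal) (x : ℝ) :
    ∫ z, |z| ∂(gaussianReal (-x) v) = ∫ z, |z| ∂(gaussianReal x v) := by
  have h := gaussianReal_map_const_mul (μ := x) (v := v) (-1)
  have hv1 : (⟨(-1:ℝ)^2, sq_nonneg _⟩ * v : NNReal) = v := by
    ext
    simp
    exact one_mul v
  erw [hv1, neg_one_mul] at h
  rw [← h, integral_map (by fun_prop) measurable_abs.aestronglyMeasurable]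
  simp

/-- For a Brownian motion started at `x`, `E[|B_t|] = |x| + ∫₀ᵗ p(s,x) ds`, where
`p` is the Gaussian heat kernel: the law of `B_t` is `gaussianReal x t`. -/
theorem abs_moment_brownian (p : ℝ → ℝ → ℝ)
    (hp : ∀ t y : ℝ, 0 < t →
      p t y = (Real.sqrt (2 * Real.pi * t))⁻¹ * Real.exp (-y ^ 2 / (2 * t)))
    (x : ℝ) :
    ∀ t : NNReal,
      (∫ z, |z| ∂(gaussianReal x t)) = |x| + ∫ s in Set.Ioc (0:ℝ) (t:ℝ), p s x := by
  intro t
  by_cases h0 : t = 0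
  · subst h0
    simp [gaussianReal_zero_var, integral_dirac]
  · have ht : 0 < (t:ℝ) := NNReal.coe_pos.mpr (pos_iff_ne_zero.mpr h0)
    have hq : ∫ s in Set.Ioc (0:ℝ) (t:ℝ), p s x
        = ∫ s in Set.Ioc (0:ℝ) (t:ℝ), (Real.sqrt (2*π*s))⁻¹ * Real.exp (-x^2/(2*s)) := by
      refine setIntegral_congr_fun measurableSet_Ioc fun s hs => ?_
      rw [hp s x hs.1]
    rcases le_or_gt 0 x with hx | hx
    · rw [hq]
      exact key_pos t h0 hx
    · rw [hq, ← gauss_abs_even t x, key_pos t h0 (neg_nonneg.mpr hx.le)]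
      simp [neg_sq, abs_neg]
end

section
/- Let g(z, z̄) = min(z, z̄)·1_{z,z̄ ≥ 0} + min(−z, −z̄)·1_{z,z̄ ≤ 0} be the covariance of a two-sided Brownian motion, and let f_t(z) = p(t, x − z) be the heat kernel centered at x. Then ∫_ℝ f_t(z̄) (∫_ℝ f_t''(z) g(z, z̄) dz) dz̄ = p(t,x) − p(2t, 0). -/
open MeasureTheory Real Filter Set

namespace HKBM

noncomputable def F (t x z : ℝ) : ℝ :=
  (Real.sqrt (2 * Real.pi * t))⁻¹ * Real.exp (-(x - z) ^ 2 / (2 * t))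

noncomputable def F1 (t x z : ℝ) : ℝ := F t x z * ((x - z) / t)

noncomputable def F2 (t x z : ℝ) : ℝ := F t x z * (((x - z) / t) ^ 2 - 1 / t)

variable {t x : ℝ}

lemma hasDerivAt_F (ht : 0 < t) (z : ℝ) : HasDerivAt (F t x) (F1 t x z) z := by
  have h1 : HasDerivAt (fun z : ℝ => -(x - z) ^ 2 / (2 * t)) ((x - z) / t) z := by
    have h0 : HasDerivAt (fun z : ℝ => x - z) (-1) z := (hasDerivAt_id z).const_sub x
    have := ((h0.pow 2).neg).div_const (2 * t)
    refine this.congr_deriv ?_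
    field_simp
    ring
  have h2 := (h1.exp).const_mul (Real.sqrt (2 * Real.pi * t))⁻¹
  refine h2.congr_deriv ?_
  simp only [F1, F]
  ring

lemma hasDerivAt_F1 (ht : 0 < t) (z : ℝ) : HasDerivAt (F1 t x) (F2 t x z) z := by
  have hρ : HasDerivAt (fun z : ℝ => (x - z) / t) (-1 / t) z :=
    ((hasDerivAt_id z).const_sub x).div_const t
  have h := (hasDerivAt_F (x := x) ht z).mul hρ
  have he : F1 t x = fun z => F t x z * ((x - z) / t) := rfl
  rw [he]
  refine h.congr_deriv ?_
  simp only [F2, F1]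
  ring

lemma deriv_deriv_F (ht : 0 < t) : deriv (deriv (F t x)) = F2 t x := by
  have h1 : deriv (F t x) = F1 t x := funext fun z => (hasDerivAt_F ht z).deriv
  rw [h1]
  exact funext fun z => (hasDerivAt_F1 ht z).deriv

lemma continuous_F : Continuous (F t x) := by
  unfold F
  fun_prop

lemma continuous_F2 : Continuous (F2 t x) := by
  unfold F2
  apply (continuous_F (t := t) (x := x)).mul
  fun_prop

lemma integrable_aux (ht : 0 < t) (n : ℕ) (hn : (-1 : ℝ) < n) :
    Integrable (fun z : ℝ => (x - z) ^ n * Real.exp (-(x - z) ^ 2 / (2 * t))) := by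
  have hb : 0 < (2 * t)⁻¹ := by positivity
  have h0 : Integrable (fun u : ℝ => u ^ (n : ℝ) * Real.exp (-(2 * t)⁻¹ * u ^ 2)) :=
    integrable_rpow_mul_exp_neg_mul_sq hb hn
  have h0' : Integrable (fun u : ℝ => u ^ n * Real.exp (-u ^ 2 / (2 * t))) := by
    have heq : (fun u : ℝ => u ^ (n : ℝ) * Real.exp (-(2 * t)⁻¹ * u ^ 2)) =
        fun u : ℝ => u ^ n * Real.exp (-u ^ 2 / (2 * t)) := by
      funext u
      rw [Real.rpow_natCast]
      have : -(2 * t)⁻¹ * u ^ 2 = -u ^ 2 / (2 * t) := by ring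
      rw [this]
    rwa [heq] at h0
  exact h0'.comp_sub_left x


lemma integrable_F (ht : 0 < t) : Integrable (F t x) := by
  have h := (integrable_aux (x := x) ht 0 (by norm_num)).const_mul
    (Real.sqrt (2 * Real.pi * t))⁻¹
  simp at h
  exact h

lemma integrable_F1 (ht : 0 < t) : Integrable (F1 t x) := by
  have h := (integrable_aux (x := x) ht 1 (by norm_num)).const_mul
    ((Real.sqrt (2 * Real.pi * t))⁻¹ * t⁻¹)
  have heq : F1 t x = fun z => (Real.sqrt (2 * Real.pi * t))⁻¹ * t⁻¹ *
      ((x - z) ^ 1 * Real.exp (-(x - z) ^ 2 / (2 * t))) := by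
    funext z; simp only [F1, F]; ring
  rw [heq]; exact h

lemma integrable_F2 (ht : 0 < t) : Integrable (F2 t x) := by
  have h2 := (integrable_aux (x := x) ht 2 (by norm_num)).const_mul
    ((Real.sqrt (2 * Real.pi * t))⁻¹ * (t ^ 2)⁻¹)
  have h0 := (integrable_aux (x := x) ht 0 (by norm_num)).const_mul
    ((Real.sqrt (2 * Real.pi * t))⁻¹ * t⁻¹)
  have heq : F2 t x = fun z =>
      (Real.sqrt (2 * Real.pi * t))⁻¹ * (t ^ 2)⁻¹ *
        ((x - z) ^ 2 * Real.exp (-(x - z) ^ 2 / (2 * t))) -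
      (Real.sqrt (2 * Real.pi * t))⁻¹ * t⁻¹ *
        ((x - z) ^ 0 * Real.exp (-(x - z) ^ 2 / (2 * t))) := by
    funext z; simp only [F2, F]; ring
  rw [heq]; exact h2.sub h0

lemma integrable_F_sq (ht : 0 < t) : Integrable (fun z => F t x z * F t x z) := by
  have ht2 : 0 < t / 2 := by linarith
  have h := (integrable_aux (x := x) ht2 0 (by norm_num)).const_mul
    ((Real.sqrt (2 * Real.pi * t))⁻¹ * (Real.sqrt (2 * Real.pi * t))⁻¹)
  have heq : (fun z => F t x z * F t x z) = fun z =>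
      (Real.sqrt (2 * Real.pi * t))⁻¹ * (Real.sqrt (2 * Real.pi * t))⁻¹ *
        ((x - z) ^ 0 * Real.exp (-(x - z) ^ 2 / (2 * (t / 2)))) := by
    funext z
    simp only [F, pow_zero, one_mul]
    rw [show -(x - z) ^ 2 / (2 * (t / 2)) = -(x - z) ^ 2 / (2 * t) + -(x - z) ^ 2 / (2 * t) by
      field_simp; ring, Real.exp_add]
    ring
  rw [heq]; exact h

lemma tendsto_sub_cocompact_atTop : Tendsto (fun z : ℝ => x - z) atTop (cocompact ℝ) := by
  have h1 : Tendsto (fun z : ℝ => x - z) atTop atBot := by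
    simp only [sub_eq_add_neg]
    exact tendsto_atBot_add_const_left atTop x tendsto_neg_atTop_atBot
  exact h1.mono_right (by exact atBot_le_cocompact)

lemma tendsto_sub_cocompact_atBot : Tendsto (fun z : ℝ => x - z) atBot (cocompact ℝ) := by
  have h1 : Tendsto (fun z : ℝ => x - z) atBot atTop := by
    simp only [sub_eq_add_neg]
    exact tendsto_atTop_add_const_left atBot x tendsto_neg_atBot_atTop
  exact h1.mono_right (by exact atTop_le_cocompact)

lemma tendsto_F1 (ht : 0 < t) (l : Filter ℝ) (hl : Tendsto (fun z : ℝ => x - z) l (cocompact ℝ)) :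
    Tendsto (F1 t x) l (nhds 0) := by
  have hb : 0 < (2 * t)⁻¹ := by positivity
  have hG := (tendsto_rpow_abs_mul_exp_neg_mul_sq_cocompact hb 1).comp hl
  have key : Tendsto (fun z => (x - z) * Real.exp (-(x - z) ^ 2 / (2 * t))) l (nhds 0) := by
    apply squeeze_zero_norm _ hG
    intro z
    simp only [Function.comp_apply, Real.norm_eq_abs, abs_mul,
      abs_of_pos (Real.exp_pos _), Real.rpow_one]
    apply le_of_eq
    congr 1
    congr 1
    ring
  have h := key.const_mul ((Real.sqrt (2 * Real.pi * t))⁻¹ * t⁻¹)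
  rw [mul_zero] at h
  apply h.congr
  intro z; simp only [F1, F]; ring


lemma integral_F2_Ioi (ht : 0 < t) (a : ℝ) : ∫ z in Ioi a, F2 t x z = -F1 t x a := by
  have h := integral_Ioi_of_hasDerivAt_of_tendsto' (a := a) (fun z _ => hasDerivAt_F1 (x := x) ht z)
    ((integrable_F2 ht).integrableOn) (tendsto_F1 ht atTop tendsto_sub_cocompact_atTop)
  rw [h]; ring

lemma integral_F2_Iic (ht : 0 < t) (a : ℝ) : ∫ z in Iic a, F2 t x z = F1 t x a := by
  have h := integral_Iic_of_hasDerivAt_of_tendsto' (a := a) (fun z _ => hasDerivAt_F1 (x := x) ht z)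
    ((integrable_F2 ht).integrableOn) (tendsto_F1 ht atBot tendsto_sub_cocompact_atBot)
  rw [h]; ring

lemma intervalIntegral_F2_mul (ht : 0 < t) (a b : ℝ) :
    ∫ z in a..b, F2 t x z * z =
      (b * F1 t x b - F t x b) - (a * F1 t x a - F t x a) := by
  have hA : ∀ z : ℝ, HasDerivAt (fun z => z * F1 t x z - F t x z) (F2 t x z * z) z := by
    intro z
    have h := ((hasDerivAt_id z).mul (hasDerivAt_F1 (x := x) ht z)).sub
      (hasDerivAt_F (x := x) ht z)
    refine h.congr_deriv ?_
    simp only [id_eq, F1]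
    ring
  exact intervalIntegral.integral_eq_sub_of_hasDerivAt (fun z _ => hA z)
    (((continuous_F2 (t := t) (x := x)).mul continuous_id).intervalIntegrable a b)

lemma abs_g_le (g : ℝ → ℝ → ℝ)
    (hg : ∀ z z' : ℝ, g z z' =
      (if 0 ≤ z ∧ 0 ≤ z' then min z z' else 0) +
      (if z ≤ 0 ∧ z' ≤ 0 then min (-z) (-z') else 0)) (z z' : ℝ) : |g z z'| ≤ |z'| := by
  rw [hg]
  rcases le_or_gt 0 z' with hz' | hz'
  · have hB : (if z ≤ 0 ∧ z' ≤ 0 then min (-z) (-z') else 0) = 0 := by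
      split_ifs with h
      · have hz0 : z' = 0 := le_antisymm h.2 hz'
        subst hz0
        rw [neg_zero, min_eq_right (by linarith [h.1])]
      · rfl
    rw [hB, add_zero, abs_le]
    constructor
    · split_ifs with h
      · have := le_min h.1 h.2
        have := abs_nonneg z'
        linarith
      · have := abs_nonneg z'
        linarith
    · split_ifs with h
      · exact le_trans (min_le_right _ _) (le_abs_self _)
      · exact abs_nonneg z'
  · have hA : (if 0 ≤ z ∧ 0 ≤ z' then min z z' else 0) = 0 := by
      split_ifs with h
      · linarith [h.2]
      · rfl
    rw [hA, zero_add, abs_le]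
    constructor
    · split_ifs with h
      · have := le_min (neg_nonneg.mpr h.1) (neg_nonneg.mpr h.2)
        have := abs_nonneg z'
        linarith
      · have := abs_nonneg z'
        linarith
    · split_ifs with h
      · exact le_trans (min_le_right _ _) (neg_le_abs _)
      · exact abs_nonneg z'


lemma measurable_g (g : ℝ → ℝ → ℝ)
    (hg : ∀ z z' : ℝ, g z z' =
      (if 0 ≤ z ∧ 0 ≤ z' then min z z' else 0) +
      (if z ≤ 0 ∧ z' ≤ 0 then min (-z) (-z') else 0)) (z' : ℝ) :
    Measurable (fun z => g z z') := by
  have heq : (fun z => g z z') = fun z =>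
      (if 0 ≤ z ∧ 0 ≤ z' then min z z' else 0) +
      (if z ≤ 0 ∧ z' ≤ 0 then min (-z) (-z') else 0) := funext fun z => hg z z'
  rw [heq]
  have hs1 : MeasurableSet {z : ℝ | 0 ≤ z ∧ 0 ≤ z'} := by
    rcases le_or_gt 0 z' with h | h
    · convert measurableSet_Ici (a := (0 : ℝ)) using 1
      ext z; simp [h]
    · convert MeasurableSet.empty using 1
      ext z; simp [h.not_ge]
  have hs2 : MeasurableSet {z : ℝ | z ≤ 0 ∧ z' ≤ 0} := by
    rcases le_or_gt z' 0 with h | h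
    · convert measurableSet_Iic (a := (0 : ℝ)) using 1
      ext z; simp [h]
    · convert MeasurableSet.empty using 1
      ext z; simp [h.not_ge]
  exact (Measurable.ite hs1 (measurable_id.min measurable_const) measurable_const).add
    (Measurable.ite hs2 (measurable_id.neg.min measurable_const) measurable_const)

lemma integrable_F2_g (ht : 0 < t) (g : ℝ → ℝ → ℝ)
    (hg : ∀ z z' : ℝ, g z z' =
      (if 0 ≤ z ∧ 0 ≤ z' then min z z' else 0) +
      (if z ≤ 0 ∧ z' ≤ 0 then min (-z) (-z') else 0)) (z' : ℝ) :
    Integrable (fun z => F2 t x z * g z z') := by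
  have h := (integrable_F2 (x := x) ht).bdd_mul
    ((measurable_g g hg z').aestronglyMeasurable)
    (Filter.Eventually.of_forall fun z => by simpa [Real.norm_eq_abs] using abs_g_le g hg z z')
  apply h.congr
  filter_upwards with z
  ring


lemma inner_eq (ht : 0 < t) (g : ℝ → ℝ → ℝ)
    (hg : ∀ z z' : ℝ, g z z' =
      (if 0 ≤ z ∧ 0 ≤ z' then min z z' else 0) +
      (if z ≤ 0 ∧ z' ≤ 0 then min (-z) (-z') else 0)) (z' : ℝ) :
    ∫ z, F2 t x z * g z z' = F t x 0 - F t x z' := by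
  have hInt := integrable_F2_g (x := x) ht g hg z'
  rcases le_total 0 z' with h | h
  · rw [← intervalIntegral.integral_Iic_add_Ioi (b := 0) hInt.integrableOn hInt.integrableOn]
    have h1 : ∫ z in Iic 0, F2 t x z * g z z' = 0 := by
      apply setIntegral_eq_zero_of_forall_eq_zero
      intro z hz
      have hz : z ≤ 0 := hz
      have hgz : g z z' = 0 := by
        rw [hg]
        split_ifs with h1 h2 h2
        · have hz0 : z = 0 := le_antisymm hz h1.1
          have hz'0 : z' = 0 := le_antisymm h2.2 h
          simp [hz0, hz'0]
        · have hz0 : z = 0 := le_antisymm hz h1.1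
          simp [hz0, min_eq_left h1.2]
        · have hz'0 : z' = 0 := le_antisymm h2.2 h
          simp [hz'0, min_eq_right (neg_nonneg.mpr h2.1)]
        · simp
      rw [hgz, mul_zero]
    rw [h1, zero_add, ← Set.Ioc_union_Ioi_eq_Ioi h,
      setIntegral_union Set.Ioc_disjoint_Ioi_same measurableSet_Ioi hInt.integrableOn
        hInt.integrableOn]
    have h2 : ∫ z in Ioc 0 z', F2 t x z * g z z' = ∫ z in Ioc 0 z', F2 t x z * z := by
      apply setIntegral_congr_fun measurableSet_Ioc
      intro z hz
      show F2 t x z * g z z' = F2 t x z * z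
      rw [hg, if_pos ⟨hz.1.le, h⟩, if_neg (fun hc => absurd hc.1 (not_le.mpr hz.1)), add_zero,
        min_eq_left hz.2]
    have h3 : ∫ z in Ioi z', F2 t x z * g z z' = ∫ z in Ioi z', F2 t x z * z' := by
      apply setIntegral_congr_fun measurableSet_Ioi
      intro z hz
      have hzpos : 0 < z := lt_of_le_of_lt h hz
      show F2 t x z * g z z' = F2 t x z * z'
      rw [hg, if_pos ⟨hzpos.le, h⟩, if_neg (fun hc => absurd hc.1 (not_le.mpr hzpos)), add_zero,
        min_eq_right (le_of_lt hz)]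
    rw [h2, h3, integral_mul_const, integral_F2_Ioi ht,
      ← intervalIntegral.integral_of_le h, intervalIntegral_F2_mul ht]
    ring
  · rw [← intervalIntegral.integral_Iic_add_Ioi (b := 0) hInt.integrableOn hInt.integrableOn]
    have h1 : ∫ z in Ioi 0, F2 t x z * g z z' = 0 := by
      apply setIntegral_eq_zero_of_forall_eq_zero
      intro z hz
      have hz : (0 : ℝ) < z := hz
      have hgz : g z z' = 0 := by
        rw [hg]
        split_ifs with h1 h2 h2
        · exact absurd h2.1 (not_le.mpr hz)
        · have hz'0 : z' = 0 := le_antisymm h h1.2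
          simp [hz'0, min_eq_right hz.le]
        · exact absurd h2.1 (not_le.mpr hz)
        · simp
      rw [hgz, mul_zero]
    rw [h1, add_zero, ← Set.Iic_union_Ioc_eq_Iic h,
      setIntegral_union (Set.Iic_disjoint_Ioc le_rfl) measurableSet_Ioc hInt.integrableOn
        hInt.integrableOn]
    have h2 : ∫ z in Iic z', F2 t x z * g z z' = ∫ z in Iic z', F2 t x z * -z' := by
      apply setIntegral_congr_fun measurableSet_Iic
      intro z hz
      have hz : z ≤ z' := hz
      show F2 t x z * g z z' = F2 t x z * -z'
      rw [hg]
      split_ifs with h1 h2 h2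
      · have hz'0 : z' = 0 := le_antisymm h h1.2
        have hz0 : z = 0 := le_antisymm (hz.trans h) h1.1
        simp [hz0, hz'0]
      · exact absurd ⟨hz.trans h, h⟩ h2
      · rw [zero_add, min_eq_right (neg_le_neg hz)]
      · exact absurd ⟨hz.trans h, h⟩ h2
    have h3 : ∫ z in Ioc z' 0, F2 t x z * g z z' = ∫ z in Ioc z' 0, F2 t x z * -z := by
      apply setIntegral_congr_fun measurableSet_Ioc
      intro z hz
      show F2 t x z * g z z' = F2 t x z * -z
      rw [hg]
      split_ifs with h1 h2 h2
      · have hz0 : z = 0 := le_antisymm hz.2 h1.1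
        have hzlt : z' < 0 := hz0 ▸ hz.1
        exact absurd h1.2 (not_le.mpr hzlt)
      · exact absurd ⟨hz.2, h⟩ h2
      · rw [zero_add, min_eq_left (neg_le_neg hz.1.le)]
      · exact absurd ⟨hz.2, h⟩ h2
    rw [h2, h3, integral_mul_const, integral_F2_Iic ht]
    simp only [mul_neg, integral_neg]
    rw [← intervalIntegral.integral_of_le h, intervalIntegral_F2_mul ht]
    ring


lemma integral_exp_shift (ht : 0 < t) (c : ℝ) :
    ∫ z : ℝ, Real.exp (-(x - z) ^ 2 / (c * t)) = ∫ u : ℝ, Real.exp (-u ^ 2 / (c * t)) :=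
  integral_sub_left_eq_self (fun u => Real.exp (-u ^ 2 / (c * t))) volume x

lemma sqrt_two_pi_t_pos (ht : 0 < t) : 0 < Real.sqrt (2 * Real.pi * t) :=
  Real.sqrt_pos.mpr (by positivity)

lemma integral_F (ht : 0 < t) : ∫ z, F t x z = 1 := by
  unfold F
  rw [integral_const_mul, integral_exp_shift ht 2]
  have hgauss : ∫ u : ℝ, Real.exp (-u ^ 2 / (2 * t)) = Real.sqrt (2 * Real.pi * t) := by
    have h := integral_gaussian (2 * t)⁻¹
    have heq : (fun u : ℝ => Real.exp (-(2 * t)⁻¹ * u ^ 2)) =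
        fun u : ℝ => Real.exp (-u ^ 2 / (2 * t)) := by
      funext u; congr 1; ring
    rw [heq] at h
    rw [h]
    congr 1
    field_simp
  rw [hgauss, inv_mul_cancel₀ (ne_of_gt (sqrt_two_pi_t_pos ht))]

lemma integral_F_sq (ht : 0 < t) :
    ∫ z, F t x z * F t x z = (Real.sqrt (2 * Real.pi * (2 * t)))⁻¹ := by
  have heq : (fun z => F t x z * F t x z) = fun z =>
      (Real.sqrt (2 * Real.pi * t))⁻¹ * (Real.sqrt (2 * Real.pi * t))⁻¹ *
        Real.exp (-(x - z) ^ 2 / (1 * t)) := by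
    funext z
    simp only [F]
    rw [show -(x - z) ^ 2 / (1 * t) = -(x - z) ^ 2 / (2 * t) + -(x - z) ^ 2 / (2 * t) by
      field_simp; ring, Real.exp_add]
    ring
  rw [heq, integral_const_mul, integral_exp_shift ht 1]
  have hgauss : ∫ u : ℝ, Real.exp (-u ^ 2 / (1 * t)) = Real.sqrt (Real.pi * t) := by
    have h := integral_gaussian t⁻¹
    have heq2 : (fun u : ℝ => Real.exp (-t⁻¹ * u ^ 2)) =
        fun u : ℝ => Real.exp (-u ^ 2 / (1 * t)) := by
      funext u; congr 1; ring
    rw [heq2] at h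
    rw [h]
    congr 1
    field_simp
  rw [hgauss]
  have h1 : Real.sqrt (2 * Real.pi * (2 * t)) = 2 * Real.sqrt (Real.pi * t) := by
    rw [show 2 * Real.pi * (2 * t) = 4 * (Real.pi * t) by ring,
      show (4 : ℝ) = 2 ^ 2 by norm_num, Real.sqrt_mul (by positivity),
      Real.sqrt_sq (by norm_num : (0:ℝ) ≤ 2)]
  rw [h1]
  have hs : 0 < Real.sqrt (Real.pi * t) := Real.sqrt_pos.mpr (by positivity)
  have hss : Real.sqrt (Real.pi * t) * Real.sqrt (Real.pi * t) = Real.pi * t :=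
    Real.mul_self_sqrt (by positivity)
  have hc : (Real.sqrt (2 * Real.pi * t))⁻¹ * (Real.sqrt (2 * Real.pi * t))⁻¹
      = (2 * Real.pi * t)⁻¹ := by
    rw [← mul_inv]
    congr 1
    exact Real.mul_self_sqrt (by positivity)
  rw [hc, show 2 * Real.pi * t = 2 * (Real.sqrt (Real.pi * t) * Real.sqrt (Real.pi * t)) by
    rw [hss]; ring]
  rw [mul_inv, mul_inv, mul_inv]
  field_simp

end HKBM

/-- With `g` the covariance of a two-sided Brownian motion and `f_t(z) = p(t, x − z)` the
heat kernel centered at `x`, one has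
`∫ f_t(z̄) (∫ f_t''(z) g(z,z̄) dz) dz̄ = p(t,x) − p(2t,0)`. -/
theorem heat_kernel_bm_covariance_identity (p : ℝ → ℝ → ℝ)
    (hp : ∀ t y : ℝ, 0 < t →
      p t y = (Real.sqrt (2 * Real.pi * t))⁻¹ * Real.exp (-y ^ 2 / (2 * t)))
    (g : ℝ → ℝ → ℝ)
    (hg : ∀ z z' : ℝ, g z z' =
      (if 0 ≤ z ∧ 0 ≤ z' then min z z' else 0) +
      (if z ≤ 0 ∧ z' ≤ 0 then min (-z) (-z') else 0))
    (t x : ℝ) (ht : 0 < t) :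
    (∫ z', p t (x - z') * ∫ z, deriv (deriv (fun w => p t (x - w))) z * g z z') =
      p t x - p (2 * t) 0 := by
  have hfun : (fun w => p t (x - w)) = HKBM.F t x := funext fun w => hp t (x - w) ht
  rw [hfun, HKBM.deriv_deriv_F ht]
  have hp' : ∀ z', p t (x - z') = HKBM.F t x z' := fun z' => hp t (x - z') ht
  simp_rw [hp', HKBM.inner_eq ht g hg]
  have hInt1 : Integrable (fun z' => HKBM.F t x z' * HKBM.F t x 0) :=
    (HKBM.integrable_F ht).mul_const _
  have hInt2 := HKBM.integrable_F_sq (t := t) (x := x) ht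
  have heq : (fun z' => HKBM.F t x z' * (HKBM.F t x 0 - HKBM.F t x z')) =
      fun z' => HKBM.F t x z' * HKBM.F t x 0 - HKBM.F t x z' * HKBM.F t x z' := by
    funext z'; ring
  rw [heq, integral_sub hInt1 hInt2, MeasureTheory.integral_mul_const, HKBM.integral_F ht,
    one_mul, HKBM.integral_F_sq ht, hp t x ht, hp (2 * t) 0 (by positivity)]
  norm_num [HKBM.F]
end
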